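/- With the assumptions of the mixed-Gaussian random-horizon model, the Expected Shortfall at level c satisfies ES = (1/(1-c)) ∫₀^∞ [ -μ_h Φ((-μ_h - VaR)/σ_h) + σ_h φ((-μ_h - VaR)/σ_h) ] dF_H(h), where VaR solves ∫₀^∞ Φ((μ_h + VaR)/σ_h) dF_H(h) = c. -/

import Mathlib

open MeasureTheory ProbabilityTheory Real Set

/-- Standard normal CDF. -/
noncomputable def stdNormalCDF (x : ℝ) : ℝ :=
  ((gaussianReal 0 1) (Set.Iic x)).toReal

/-- Standard normal density. -/
noncomputable def stdNormalPDF (x : ℝ) : ℝ :=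
  Real.exp (-x ^ 2 / 2) / Real.sqrt (2 * Real.pi)

open Filter Topology

lemma pdf_nonneg (x : ℝ) : 0 ≤ stdNormalPDF x :=
  div_nonneg (exp_nonneg _) (Real.sqrt_nonneg _)

lemma pdf_pos (x : ℝ) : 0 < stdNormalPDF x :=
  div_pos (exp_pos _) (Real.sqrt_pos.2 (by positivity))

lemma pdf_cont : Continuous stdNormalPDF := by
  unfold stdNormalPDF
  fun_prop

lemma pdf_eq_gauss : stdNormalPDF = gaussianPDFReal 0 1 := by
  funext x
  simp [stdNormalPDF, gaussianPDFReal, div_eq_inv_mul, mul_comm]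

lemma pdf_integrable : Integrable stdNormalPDF := by
  rw [pdf_eq_gauss]; exact integrable_gaussianPDFReal 0 1

lemma cdf_eq_integral (x : ℝ) : stdNormalCDF x = ∫ s in Iic x, stdNormalPDF s := by
  rw [stdNormalCDF, gaussianReal_apply_eq_integral 0 one_ne_zero,
    ENNReal.toReal_ofReal (setIntegral_nonneg measurableSet_Iic fun s _ =>
      gaussianPDFReal_nonneg 0 1 s), pdf_eq_gauss]

lemma cdf_nonneg (x : ℝ) : 0 ≤ stdNormalCDF x := ENNReal.toReal_nonneg

lemma cdf_le_one (x : ℝ) : stdNormalCDF x ≤ 1 := by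
  rw [stdNormalCDF]
  exact ENNReal.toReal_le_of_le_ofReal zero_le_one (by simpa using prob_le_one)

lemma hasDerivAt_pdf (x : ℝ) : HasDerivAt stdNormalPDF (-x * stdNormalPDF x) x := by
  have h1 : HasDerivAt (fun y : ℝ => -y ^ 2 / 2) (-x) x := by
    have h := ((hasDerivAt_pow 2 x).neg).div_const 2
    exact h.congr_deriv (by norm_num; ring)
  have h2 := (h1.exp).div_const (Real.sqrt (2 * Real.pi))
  have : HasDerivAt stdNormalPDF (rexp (-x ^ 2 / 2) * -x / √(2 * π)) x := h2
  convert this using 1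
  simp [stdNormalPDF]; ring

lemma sq_tendsto_atBot : Tendsto (fun x : ℝ => x ^ 2) atBot atTop := by
  have := (tendsto_pow_atTop (n := 2) two_ne_zero : Tendsto (fun x : ℝ => x ^ 2) atTop atTop).comp tendsto_neg_atBot_atTop
  refine this.congr fun x => ?_
  show (-x) ^ 2 = x ^ 2
  ring

lemma pdf_tendsto_of (l : Filter ℝ) (h : Tendsto (fun x : ℝ => x ^ 2) l atTop) :
    Tendsto stdNormalPDF l (𝓝 0) := by
  have h1 : Tendsto (fun x : ℝ => -x ^ 2 / 2) l atBot := by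
    apply Tendsto.atBot_div_const two_pos
    exact tendsto_neg_atTop_atBot.comp h
  have h2 := (Real.tendsto_exp_atBot.comp h1).div_const (Real.sqrt (2 * Real.pi))
  rw [zero_div] at h2
  exact h2

lemma pdf_tendsto_atBot : Tendsto stdNormalPDF atBot (𝓝 0) :=
  pdf_tendsto_of _ sq_tendsto_atBot

lemma pdf_tendsto_atTop : Tendsto stdNormalPDF atTop (𝓝 0) :=
  pdf_tendsto_of _ (tendsto_pow_atTop (n := 2) two_ne_zero)

lemma integrable_id_mul_pdf : Integrable (fun s : ℝ => s * stdNormalPDF s) := by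
  have h := integrable_rpow_mul_exp_neg_mul_sq (b := 1/2) (by norm_num) (s := 1) (by norm_num)
  simp only [Real.rpow_one] at h
  have := h.div_const (Real.sqrt (2 * Real.pi))
  refine this.congr (ae_of_all _ fun x => ?_)
  simp only [stdNormalPDF]
  ring_nf

lemma integral_Iic_id_mul_pdf (z : ℝ) :
    ∫ s in Iic z, s * stdNormalPDF s = -stdNormalPDF z := by
  have h := integral_Iic_of_hasDerivAt_of_tendsto' (f := fun s => -stdNormalPDF s)
    (f' := fun s => s * stdNormalPDF s) (a := z) (m := 0)
    (fun x _ => by exact ((hasDerivAt_pdf x).neg).congr_deriv (by ring))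
    integrable_id_mul_pdf.integrableOn (by simpa using pdf_tendsto_atBot.neg)
  simpa using h

lemma hasDerivAt_cdf (x : ℝ) : HasDerivAt stdNormalCDF (stdNormalPDF x) x := by
  have key : ∀ u : ℝ, stdNormalCDF u = (∫ s in Iic 0, stdNormalPDF s) + ∫ s in (0:ℝ)..u, stdNormalPDF s := by
    intro u
    rw [cdf_eq_integral, ← intervalIntegral.integral_Iic_sub_Iic
      pdf_integrable.integrableOn pdf_integrable.integrableOn]
    ring
  have hD : HasDerivAt (fun u => (∫ s in Iic 0, stdNormalPDF s) + ∫ s in (0:ℝ)..u, stdNormalPDF s)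
      (stdNormalPDF x) x := by
    have := (intervalIntegral.integral_hasDerivAt_right (a := 0) (b := x)
      (pdf_integrable.intervalIntegrable)
      (pdf_integrable.aestronglyMeasurable.stronglyMeasurableAtFilter)
      pdf_cont.continuousAt)
    simpa using this.const_add ((∫ s in Iic 0, stdNormalPDF s))
  exact hD.congr_of_eventuallyEq (Eventually.of_forall key)

lemma cdf_cont : Continuous stdNormalCDF :=
  continuous_iff_continuousAt.2 fun x => (hasDerivAt_cdf x).continuousAt

lemma cdf_le_pdf_div {u : ℝ} (hu : u < 0) : stdNormalCDF u ≤ stdNormalPDF u / (-u) := by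
  have hmono : ∫ s in Iic u, stdNormalPDF s ≤ ∫ s in Iic u, (s / u) * stdNormalPDF s := by
    refine setIntegral_mono_on pdf_integrable.integrableOn
      ((integrable_id_mul_pdf.div_const u).congr (ae_of_all _ fun s => by ring)).integrableOn
      measurableSet_Iic fun s hs => ?_
    have h1 : (1:ℝ) ≤ s / u := by
      rw [le_div_iff_of_neg hu]
      simpa using hs
    nlinarith [pdf_nonneg s]
  have heq : ∫ s in Iic u, (s / u) * stdNormalPDF s = stdNormalPDF u / (-u) := by
    have : ∀ s : ℝ, (s / u) * stdNormalPDF s = u⁻¹ * (s * stdNormalPDF s) := fun s => by ring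
    simp_rw [this, integral_const_mul, integral_Iic_id_mul_pdf]
    rw [div_neg, div_eq_inv_mul, ← mul_neg]
  rw [cdf_eq_integral]
  linarith

lemma id_mul_cdf_tendsto_atBot : Tendsto (fun u : ℝ => u * stdNormalCDF u) atBot (𝓝 0) := by
  have hle : ∀ᶠ u in atBot, u * stdNormalCDF u ≤ 0 := by
    filter_upwards [eventually_lt_atBot (0:ℝ)] with u hu
    exact mul_nonpos_of_nonpos_of_nonneg hu.le (cdf_nonneg u)
  have hge : ∀ᶠ u in atBot, -stdNormalPDF u ≤ u * stdNormalCDF u := by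
    filter_upwards [eventually_lt_atBot (0:ℝ)] with u hu
    have h := cdf_le_pdf_div hu
    have := mul_le_mul_of_nonpos_left h hu.le
    calc -stdNormalPDF u = u * (stdNormalPDF u / (-u)) := by
          rw [div_neg, mul_neg, mul_comm, div_mul_cancel₀ _ hu.ne]
        _ ≤ u * stdNormalCDF u := this
  exact tendsto_of_tendsto_of_tendsto_of_le_of_le' (by simpa using pdf_tendsto_atBot.neg)
    tendsto_const_nhds hge hle

lemma cdf_add_pdf_tendsto : Tendsto (fun u : ℝ => u * stdNormalCDF u + stdNormalPDF u) atBot (𝓝 0) := by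
  simpa using id_mul_cdf_tendsto_atBot.add pdf_tendsto_atBot

/-- antiderivative fact: derivative of `u ↦ u Φ u + φ u` is `Φ u`. -/
lemma hasDerivAt_primitive (u : ℝ) :
    HasDerivAt (fun u : ℝ => u * stdNormalCDF u + stdNormalPDF u) (stdNormalCDF u) u := by
  have h1 := (hasDerivAt_id u).mul (hasDerivAt_cdf u)
  have h2 := h1.add (hasDerivAt_pdf u)
  exact h2.congr_deriv (by simp)

section Inner

variable (a m s : ℝ)

/-- The inner integrand: `t ↦ Φ((a - t - m)/s)`. -/
noncomputable def innerFun (t : ℝ) : ℝ := stdNormalCDF ((a - t - m) / s)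

/-- Its antiderivative (up to sign). -/
noncomputable def innerPrim (t : ℝ) : ℝ :=
  -s * (((a - t - m) / s) * stdNormalCDF ((a - t - m) / s) + stdNormalPDF ((a - t - m) / s))

lemma hasDerivAt_innerPrim (hs : 0 < s) (t : ℝ) :
    HasDerivAt (innerPrim a m s) (innerFun a m s t) t := by
  have hz : HasDerivAt (fun t : ℝ => (a - t - m) / s) (-1 / s) t := by
    have : HasDerivAt (fun t : ℝ => a - t - m) (-1) t := by
      simpa using (((hasDerivAt_id t).const_sub a).sub_const m)
    exact this.div_const s
  have h2 := ((hasDerivAt_primitive ((a - t - m) / s)).comp t hz).const_mul (-s)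
  exact h2.congr_deriv (by field_simp; rfl)

lemma innerPrim_tendsto (hs : 0 < s) : Tendsto (innerPrim a m s) atTop (𝓝 0) := by
  have hz : Tendsto (fun t : ℝ => (a - t - m) / s) atTop atBot := by
    apply Tendsto.atBot_div_const hs
    apply tendsto_atBot_add_const_right
    exact tendsto_atBot_add_const_left _ _ tendsto_neg_atTop_atBot
  have := (cdf_add_pdf_tendsto.comp hz).const_mul (-s)
  rw [mul_zero] at this
  exact this.congr fun t => by simp [innerPrim, Function.comp]

lemma innerFun_integrableOn (hs : 0 < s) : IntegrableOn (innerFun a m s) (Ioi 0) := by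
  exact integrableOn_Ioi_deriv_of_nonneg' (fun x _ => hasDerivAt_innerPrim a m s hs x)
    (fun x _ => cdf_nonneg _) (innerPrim_tendsto a m s hs)

lemma innerFun_integral (hs : 0 < s) :
    ∫ t in Ioi 0, innerFun a m s t
      = s * (((a - m) / s) * stdNormalCDF ((a - m) / s) + stdNormalPDF ((a - m) / s)) := by
  rw [integral_Ioi_of_hasDerivAt_of_nonneg' (fun x _ => hasDerivAt_innerPrim a m s hs x)
    (fun x _ => cdf_nonneg _) (innerPrim_tendsto a m s hs)]
  simp [innerPrim]

end Inner

lemma integrable_cdf_comp {α : Type*} [MeasurableSpace α] (ν : Measure α) [IsFiniteMeasure ν]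
    {f : α → ℝ} (hf : Measurable f) : Integrable (fun h => stdNormalCDF (f h)) ν := by
  refine (integrable_const (1:ℝ)).mono'
    (cdf_cont.measurable.comp hf).aestronglyMeasurable (ae_of_all _ fun h => ?_)
  rw [Real.norm_eq_abs, abs_of_nonneg (cdf_nonneg _)]
  exact cdf_le_one _

/-- In the mixed-Gaussian random-horizon model, the Expected Shortfall
at level `c` satisfies
`ES = (1/(1-c)) ∫₀^∞ [-μ_h Φ((-μ_h - VaR)/σ_h) + σ_h φ((-μ_h - VaR)/σ_h)] dF_H(h)`,
where `VaR` solves `∫₀^∞ Φ((μ_h + VaR)/σ_h) dF_H(h) = c` and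
`ES := -(1/(1-c))·E[Y·1{Y ≤ -VaR}]` with `P(Y ≤ -VaR) = 1 - c`. -/
theorem es_random_horizon_formula
    {Ω : Type*} [MeasureSpace Ω] [IsProbabilityMeasure (ℙ : Measure Ω)]
    (Y H : Ω → ℝ) (hYmeas : Measurable Y) (hYint : Integrable Y ℙ)
    (hHmeas : Measurable H) (hHpos : ∀ᵐ ω ∂ℙ, 0 < H ω)
    (μ σ : ℝ → ℝ) (hμ : Measurable μ) (hσ : Measurable σ)
    (hσpos : ∀ h, 0 < σ h)
    -- conditionally on H = h, Y is N(μ_h, σ_h²): the law of Y is the Gaussian mixture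
    (hmix : ∀ x : ℝ, (ℙ {ω | Y ω ≤ x}).toReal
      = ∫ h, stdNormalCDF ((x - μ h) / σ h) ∂(Measure.map H ℙ))
    (c : ℝ) (hc : c ∈ Set.Ioo (0 : ℝ) 1)
    (v : ℝ)
    (hv : ∫ h, stdNormalCDF ((μ h + v) / σ h) ∂(Measure.map H ℙ) = c)
    (hvprob : (ℙ {ω | Y ω ≤ -v}).toReal = 1 - c) :
    -(1 / (1 - c)) * ∫ ω in {ω | Y ω ≤ -v}, Y ω ∂ℙ
      = (1 / (1 - c)) * ∫ h,
          (-(μ h) * stdNormalCDF ((-(μ h) - v) / σ h)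
            + σ h * stdNormalPDF ((-(μ h) - v) / σ h)) ∂(Measure.map H ℙ) := by
  set F := Measure.map H ℙ with hF
  haveI : IsProbabilityMeasure F := Measure.isProbabilityMeasure_map hHmeas.aemeasurable
  set G : ℝ → ℝ := fun h => σ h * (((-v - μ h) / σ h) * stdNormalCDF ((-v - μ h) / σ h)
    + stdNormalPDF ((-v - μ h) / σ h)) with hGdef
  set g : Ω → ℝ := fun ω => max (-v - Y ω) 0 with hgdef
  have hset : MeasurableSet {ω | Y ω ≤ -v} := measurableSet_le hYmeas measurable_const
  have hgmeas : Measurable g := (measurable_const.sub hYmeas).max measurable_const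
  have hgint : Integrable g ℙ := ((integrable_const (-v)).sub hYint).pos_part
  have hΦmeas : Measurable stdNormalCDF := cdf_cont.measurable
  have hzmeas : Measurable (fun h => (-v - μ h) / σ h) := (measurable_const.sub hμ).div hσ
  -- split the truncated integral
  have hdecomp : ∀ ω, {ω | Y ω ≤ -v}.indicator Y ω
      = {ω | Y ω ≤ -v}.indicator (fun _ => -v) ω - g ω := by
    intro ω
    by_cases hω : Y ω ≤ -v
    · have hmem : ω ∈ {ω | Y ω ≤ -v} := hω
      rw [indicator_of_mem hmem, indicator_of_mem hmem, hgdef]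
      simp only
      rw [max_eq_left (by linarith)]; ring
    · have hmem : ω ∉ {ω | Y ω ≤ -v} := hω
      rw [indicator_of_notMem hmem, indicator_of_notMem hmem, hgdef]
      simp only
      rw [max_eq_right (by simp only [mem_setOf_eq, not_le] at hω; linarith)]; ring
  have hsplit : ∫ ω in {ω | Y ω ≤ -v}, Y ω ∂ℙ = -v * (1 - c) - ∫ ω, g ω ∂ℙ := by
    rw [← integral_indicator hset, integral_congr_ae (ae_of_all _ hdecomp),
      integral_sub ((integrable_const (-v)).indicator hset) hgint,
      integral_indicator hset, setIntegral_const, smul_eq_mul, measureReal_def, hvprob]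
    ring_nf
  -- layer cake computation
  have e1 : ∫⁻ ω, ENNReal.ofReal (g ω) ∂ℙ = ∫⁻ t in Ioi 0, ℙ {ω | t ≤ g ω} :=
    lintegral_eq_lintegral_meas_le ℙ (ae_of_all _ fun ω => le_max_right _ _) hgmeas.aemeasurable
  have e2 : ∀ t ∈ Ioi (0:ℝ), ℙ {ω | t ≤ g ω}
      = ∫⁻ h, ENNReal.ofReal (stdNormalCDF ((-v - t - μ h) / σ h)) ∂F := by
    intro t ht
    have hseteq : {ω | t ≤ g ω} = {ω | Y ω ≤ -v - t} := by
      ext ω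
      simp only [hgdef, mem_setOf_eq, le_max_iff]
      constructor
      · rintro (h | h)
        · linarith
        · exact absurd h (by simpa using ht.out.not_ge)
      · intro h; left; linarith
    rw [hseteq, ← ENNReal.ofReal_toReal (measure_ne_top ℙ _), hmix (-v - t),
      ofReal_integral_eq_lintegral_ofReal
        (integrable_cdf_comp F (f := fun h => (-v - t - μ h) / σ h) ((measurable_const.sub hμ).div hσ))
        (ae_of_all _ fun h => cdf_nonneg _)]
  have e4 : ∀ h : ℝ, ∫⁻ t in Ioi 0, ENNReal.ofReal (stdNormalCDF ((-v - t - μ h) / σ h))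
      = ENNReal.ofReal (G h) := by
    intro h
    have hint := innerFun_integrableOn (-v) (μ h) (σ h) (hσpos h)
    have key := ofReal_integral_eq_lintegral_ofReal hint
      (ae_of_all _ fun t => cdf_nonneg _)
    rw [innerFun_integral (-v) (μ h) (σ h) (hσpos h)] at key
    simp only [innerFun] at key
    exact key.symm
  -- the swap
  have hswap : ∫⁻ t in Ioi 0, (∫⁻ h, ENNReal.ofReal (stdNormalCDF ((-v - t - μ h) / σ h)) ∂F)
      = ∫⁻ h, (∫⁻ t in Ioi 0, ENNReal.ofReal (stdNormalCDF ((-v - t - μ h) / σ h))) ∂F := by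
    apply lintegral_lintegral_swap
    apply Measurable.aemeasurable
    exact ENNReal.measurable_ofReal.comp (hΦmeas.comp
      (((measurable_const.sub measurable_fst).sub (hμ.comp measurable_snd)).div
        (hσ.comp measurable_snd)))
  have combined : ∫⁻ ω, ENNReal.ofReal (g ω) ∂ℙ = ∫⁻ h, ENNReal.ofReal (G h) ∂F := by
    rw [e1, setLIntegral_congr_fun measurableSet_Ioi e2, hswap]
    exact lintegral_congr e4
  have hGnn : ∀ h, 0 ≤ G h := by
    intro h
    rw [hGdef]
    simp only
    rw [← innerFun_integral (-v) (μ h) (σ h) (hσpos h)]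
    exact setIntegral_nonneg measurableSet_Ioi fun t _ => cdf_nonneg _
  have hGmeas : Measurable G :=
    hσ.mul ((hzmeas.mul (hΦmeas.comp hzmeas)).add (pdf_cont.measurable.comp hzmeas))
  have hGint : Integrable G F := by
    refine ⟨hGmeas.aestronglyMeasurable, ?_⟩
    rw [hasFiniteIntegral_iff_ofReal (ae_of_all _ hGnn), ← combined]
    exact (hasFiniteIntegral_iff_ofReal (f := g) (μ := ℙ)
      (ae_of_all _ fun ω => le_max_right _ _)).1 hgint.hasFiniteIntegral
  have hgeq : ∫ ω, g ω ∂ℙ = ∫ h, G h ∂F := by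
    have hg1 := integral_eq_lintegral_of_nonneg_ae (μ := ℙ) (f := g)
      (ae_of_all _ fun ω => le_max_right _ _) hgmeas.aestronglyMeasurable
    have hg2 := integral_eq_lintegral_of_nonneg_ae (μ := F) (f := G)
      (ae_of_all _ hGnn) hGmeas.aestronglyMeasurable
    rw [hg1, hg2, combined]
  -- the constant term as an integral
  have hΦintF : Integrable (fun h => stdNormalCDF ((-v - μ h) / σ h)) F :=
    integrable_cdf_comp F hzmeas
  have hconst : -v * (1 - c) = ∫ h, -v * stdNormalCDF ((-v - μ h) / σ h) ∂F := by
    rw [integral_const_mul, ← hmix (-v), hvprob]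
  -- finish
  have hfinal : ∫ ω in {ω | Y ω ≤ -v}, Y ω ∂ℙ
      = ∫ h, (μ h * stdNormalCDF ((-v - μ h) / σ h)
          - σ h * stdNormalPDF ((-v - μ h) / σ h)) ∂F := by
    rw [hsplit, hgeq, hconst, ← integral_sub (hΦintF.const_mul (-v)) hGint]
    refine integral_congr_ae (ae_of_all _ fun h => ?_)
    have hσne : σ h ≠ 0 := (hσpos h).ne'
    rw [hGdef]
    simp only
    field_simp
    ring
  rw [hfinal]
  have hlast : ∫ h, (-(μ h) * stdNormalCDF ((-(μ h) - v) / σ h)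
        + σ h * stdNormalPDF ((-(μ h) - v) / σ h)) ∂F
      = -∫ h, (μ h * stdNormalCDF ((-v - μ h) / σ h)
        - σ h * stdNormalPDF ((-v - μ h) / σ h)) ∂F := by
    rw [← integral_neg]
    refine integral_congr_ae (ae_of_all _ fun h => ?_)
    simp only
    rw [show ((-(μ h) - v) / σ h : ℝ) = (-v - μ h) / σ h from by ring]
    ring
  rw [hlast]
  ring
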